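/- Two finite sequences of distinct integers (g_μ, ..., g_p, k_{α+1}, ..., k_q) and (g_{μ+1}−1, ..., g_p−1, k_{α+1}−1, ..., k_q−1, n), where all entries of the first lie in {g_μ,...,n} with g_μ its minimum and n among its members, determine permutations (of their common underlying sets suitably identified) of the same sign: shifting all entries down by 1 and moving the resulting smallest entry from front to back each multiply the sign by (−1)^{n−g_μ}, so the composite preserves sign. -/

import Mathlib

/- The sign of a finite sequence of distinct integers: the sign of the permutation sorting
it into increasing order, computed as `(-1)^inversions`. -/
def listSign (l : List ℤ) : ℤ :=
  (-1) ^ (Finset.univ.filter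
    (fun p : Fin l.length × Fin l.length => p.1 < p.2 ∧ l.get p.2 < l.get p.1)).card

def invSet (l : List ℤ) : Finset (Fin l.length × Fin l.length) :=
  Finset.univ.filter (fun p => p.1 < p.2 ∧ l.get p.2 < l.get p.1)

theorem invSet_map (f : ℤ → ℤ) (hf : StrictMono f) (l : List ℤ) :
    (invSet (l.map f)).card = (invSet l).card := by
  apply Finset.card_bij (fun p _ => (Fin.cast (l.length_map f) p.1, Fin.cast (l.length_map f) p.2))
  · rintro ⟨i, j⟩ hp
    simp only [invSet, Finset.mem_filter, Finset.mem_univ, true_and] at hp ⊢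
    obtain ⟨h1, h2⟩ := hp
    refine ⟨h1, ?_⟩
    rw [List.get_eq_getElem, List.get_eq_getElem, List.getElem_map, List.getElem_map,
      hf.lt_iff_lt] at h2
    exact h2
  · rintro ⟨i, j⟩ _ ⟨i', j'⟩ _ h
    have h1 : (i : ℕ) = i' := congrArg (fun p : Fin l.length × Fin l.length => (p.1 : ℕ)) h
    have h2 : (j : ℕ) = j' := congrArg (fun p : Fin l.length × Fin l.length => (p.2 : ℕ)) h
    exact Prod.ext (Fin.ext h1) (Fin.ext h2)
  · rintro ⟨i, j⟩ hp
    refine ⟨(Fin.cast (l.length_map f).symm i, Fin.cast (l.length_map f).symm j), ?_, rfl⟩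
    simp only [invSet, Finset.mem_filter, Finset.mem_univ, true_and] at hp ⊢
    refine ⟨hp.1, ?_⟩
    have h2 := hp.2
    rw [List.get_eq_getElem, List.get_eq_getElem] at h2 ⊢
    simp only [List.getElem_map, hf.lt_iff_lt]
    exact h2

theorem get_cons_pos (a : ℤ) (t : List ℤ) (i : Fin (a :: t).length) (hi : (i : ℕ) ≠ 0) :
    (a :: t).get i = t.get ⟨(i : ℕ) - 1,
      by have := i.isLt; simp only [List.length_cons] at this; omega⟩ := by
  rcases i with ⟨i, hisLt⟩
  cases i with
  | zero => exact absurd rfl hi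
  | succ k => rfl

theorem invSet_cons (a : ℤ) (t : List ℤ) (h : ∀ x ∈ t, a < x) :
    (invSet (a :: t)).card = (invSet t).card := by
  symm
  have e : ∀ i : Fin t.length, (i : ℕ) + 1 < (a :: t).length := by
    intro i; simp only [List.length_cons]; omega
  apply Finset.card_bij
    (fun p _ => ((⟨(p.1 : ℕ) + 1, e p.1⟩ : Fin (a :: t).length), ⟨(p.2 : ℕ) + 1, e p.2⟩))
  · rintro ⟨i, j⟩ hp
    simp only [invSet, Finset.mem_filter, Finset.mem_univ, true_and] at hp ⊢
    refine ⟨by simp only [Fin.lt_def] at hp ⊢; omega, ?_⟩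
    rw [get_cons_pos a t _ (by simp), get_cons_pos a t _ (by simp)]
    simpa using hp.2
  · rintro ⟨i, j⟩ _ ⟨i', j'⟩ _ hh
    simp only [Prod.mk.injEq, Fin.mk.injEq, Nat.add_right_cancel_iff] at hh
    exact Prod.ext (Fin.ext hh.1) (Fin.ext hh.2)
  · rintro ⟨p, q⟩ hp
    simp only [invSet, Finset.mem_filter, Finset.mem_univ, true_and] at hp
    have hpq : (p : ℕ) < (q : ℕ) := hp.1
    have hq0 : (q : ℕ) ≠ 0 := by omega
    have hp0 : (p : ℕ) ≠ 0 := by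
      intro h0
      have h2 := hp.2
      rw [get_cons_pos a t q hq0] at h2
      have hlt := h _ (List.get_mem t ⟨(q : ℕ) - 1, by have := q.isLt; simp only [List.length_cons] at this; omega⟩)
      have hgp : (a :: t).get p = a := by
        rcases p with ⟨pv, hpv⟩
        simp only at h0
        subst h0
        rfl
      rw [hgp] at h2
      exact absurd h2 (not_lt.mpr hlt.le)
    have hql : (q : ℕ) - 1 < t.length := by
      have := q.isLt; simp only [List.length_cons] at this; omega
    have hpl : (p : ℕ) - 1 < t.length := by omega
    refine ⟨(⟨(p : ℕ) - 1, hpl⟩, ⟨(q : ℕ) - 1, hql⟩), ?_, ?_⟩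
    · simp only [invSet, Finset.mem_filter, Finset.mem_univ, true_and]
      refine ⟨by simp only [Fin.lt_def]; omega, ?_⟩
      have h2 := hp.2
      rw [get_cons_pos a t q hq0, get_cons_pos a t p hp0] at h2
      exact h2
    · refine Prod.ext (Fin.ext ?_) (Fin.ext ?_) <;> simp <;> omega

theorem invSet_concat (n : ℤ) (s : List ℤ) (h : ∀ x ∈ s, x < n) :
    (invSet (s ++ [n])).card = (invSet s).card := by
  symm
  have e : ∀ i : Fin s.length, (i : ℕ) < (s ++ [n]).length := by
    intro i; simp only [List.length_append, List.length_cons, List.length_nil]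
    have := i.isLt; omega
  apply Finset.card_bij (fun p _ => ((⟨p.1, e p.1⟩ : Fin (s ++ [n]).length), ⟨p.2, e p.2⟩))
  · rintro ⟨i, j⟩ hp
    simp only [invSet, Finset.mem_filter, Finset.mem_univ, true_and] at hp ⊢
    refine ⟨hp.1, ?_⟩
    rw [List.get_eq_getElem, List.get_eq_getElem]
    simp only [List.getElem_append_left i.isLt, List.getElem_append_left j.isLt]
    exact hp.2
  · rintro ⟨i, j⟩ _ ⟨i', j'⟩ _ hh
    simp only [Prod.mk.injEq, Fin.mk.injEq] at hh
    exact Prod.ext (Fin.ext hh.1) (Fin.ext hh.2)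
  · rintro ⟨p, q⟩ hp
    simp only [invSet, Finset.mem_filter, Finset.mem_univ, true_and] at hp
    have hlen : (s ++ [n]).length = s.length + 1 := by simp
    have hq : (q : ℕ) < s.length := by
      by_contra hq
      have hq' : s.length ≤ (q : ℕ) := not_lt.mp hq
      have hpl : (p : ℕ) < s.length := by
        have h1 : (p : ℕ) < (q : ℕ) := hp.1
        have := q.isLt; omega
      have h2 := hp.2
      rw [List.get_eq_getElem, List.get_eq_getElem] at h2
      rw [List.getElem_append_left hpl] at h2
      rw [List.getElem_append_right hq'] at h2
      have hqz : (q : ℕ) - s.length = 0 := by have := q.isLt; omega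
      simp only [hqz, List.getElem_cons_zero] at h2
      exact absurd h2 (not_lt.mpr (le_of_lt (h _ (List.getElem_mem _))))
    have hpl : (p : ℕ) < s.length := lt_trans hp.1 hq
    refine ⟨(⟨p, hpl⟩, ⟨q, hq⟩), ?_, ?_⟩
    · simp only [invSet, Finset.mem_filter, Finset.mem_univ, true_and]
      refine ⟨hp.1, ?_⟩
      have h2 := hp.2
      rw [List.get_eq_getElem, List.get_eq_getElem] at h2
      rw [List.getElem_append_left hpl, List.getElem_append_left hq] at h2
      exact h2
    · exact Prod.ext (Fin.ext rfl) (Fin.ext rfl)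

/- Comparing the sequences `(g_μ, …, g_p, k_{α+1}, …, k_q)` and
`(g_{μ+1}−1, …, g_p−1, k_{α+1}−1, …, k_q−1, n)`: all entries of the first lie in
`{g,…,n}` with `g` its minimum (and first entry) and `n` among its members; the second is
obtained by shifting every entry of the tail down by `1` and appending `n`. The two
sequences have the same sign: the cyclic value shift and the rotation each multiply the
sign by `(−1)^{n−g}`, so the composite preserves it. -/
theorem listSign_shift_rotate (g n : ℤ) (l : List ℤ) (hne : l ≠ []) (hnd : l.Nodup)
    (hhead : l.head hne = g) (hmem : ∀ x ∈ l, g ≤ x ∧ x ≤ n) (hn : n ∈ l) :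
    listSign l = listSign ((l.tail.map (· - 1)).concat n) := by
  rcases l with _ | ⟨a, t⟩
  · exact absurd rfl hne
  · have ha : a = g := hhead
    subst ha
    have hsign : ∀ m : List ℤ, listSign m = (-1) ^ (invSet m).card := fun m => rfl
    rw [hsign, hsign]
    have hgt : ∀ x ∈ t, a < x := by
      intro x hx
      refine lt_of_le_of_ne (hmem x (List.mem_cons_of_mem _ hx)).1 ?_
      intro he
      exact (List.nodup_cons.mp hnd).1 (he ▸ hx)
    have h1 : (invSet (a :: t)).card = (invSet t).card := invSet_cons a t hgt
    have hmono : StrictMono (fun x : ℤ => x - 1) := fun x y hxy => by dsimp only; omega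
    have h3 : ∀ y ∈ t.map (· - 1), y < n := by
      intro y hy
      obtain ⟨x, hx, rfl⟩ := List.mem_map.mp hy
      have := (hmem x (List.mem_cons_of_mem _ hx)).2
      omega
    have h2 : ((a :: t).tail.map (· - 1)).concat n = (t.map (· - 1)) ++ [n] := by
      simp [List.concat_eq_append]
    rw [h2, invSet_concat n _ h3, invSet_map _ hmono, h1]
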